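/- Let F and G be distribution functions on ℝ with finite 2p-th moments, p > 1. Then the function t ↦ c_p(t;F,G) = ∫_{F^{-1}(1/2)}^{F^{-1}(t)} h_p'(s − G^{-1}(F(s))) ds belongs to L^2(0,1). -/

import Mathlib

open Real MeasureTheory Set
open scoped ENNReal

/-- Generalized inverse (quantile function) of a distribution function. -/
noncomputable def qf (F : ℝ → ℝ) (t : ℝ) : ℝ := sInf {x : ℝ | t ≤ F x}

/-- The function `c_p(t;F,G) = ∫_{F⁻¹(1/2)}^{F⁻¹(t)} h_p'(s − G⁻¹(F(s))) ds`
with `h_p'(x) = p·sgn(x)·|x|^{p-1}`. -/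
noncomputable def cp (p : ℝ) (F G : ℝ → ℝ) (t : ℝ) : ℝ :=
  ∫ s in (qf F (1 / 2))..(qf F t),
    p * Real.sign (s - qf G (F s)) * |s - qf G (F s)| ^ (p - 1)


lemma isLowerSet_measurableSet {s : Set ℝ} (hs : IsLowerSet s) : MeasurableSet s := by
  by_cases hne : s.Nonempty
  · by_cases hba : BddAbove s
    · set c := sSup s with hc
      have h1 : Iio c ⊆ s := fun x hx => by
        obtain ⟨y, hy, hxy⟩ := exists_lt_of_lt_csSup hne hx
        exact hs hxy.le hy
      have h2 : s ⊆ Iic c := fun x hx => le_csSup hba hx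
      by_cases hcs : c ∈ s
      · have : s = Iic c := Subset.antisymm h2 (fun x hx => by
          rcases lt_or_eq_of_le (mem_Iic.mp hx) with h | h
          · exact h1 h
          · subst h; exact hcs)
        rw [this]; exact measurableSet_Iic
      · have : s = Iio c := Subset.antisymm
          (fun x hx => lt_of_le_of_ne (h2 hx) (fun (h : x = c) => hcs (h ▸ hx))) h1
        rw [this]; exact measurableSet_Iio
    · have : s = univ := eq_univ_of_forall (fun x => by
        rw [not_bddAbove_iff] at hba
        obtain ⟨y, hy, hxy⟩ := hba x
        exact hs hxy.le hy)
      rw [this]; exact MeasurableSet.univ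
  · rw [not_nonempty_iff_eq_empty.mp hne]; exact MeasurableSet.empty

lemma measurable_of_monotoneOn_zero {S : Set ℝ} (hSm : MeasurableSet S) {f : ℝ → ℝ}
    (hf : MonotoneOn f S) (h0 : ∀ t, t ∉ S → f t = 0) : Measurable f := by
  apply measurable_of_Iio
  intro c
  have key : f ⁻¹' Iio c =
      (S ∩ {x | ∃ t, (t ∈ S ∧ f t < c) ∧ x ≤ t}) ∪ (Sᶜ ∩ (if 0 < c then univ else ∅)) := by
    ext x
    simp only [mem_preimage, mem_Iio, mem_union, mem_inter_iff, mem_setOf_eq, mem_compl_iff]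
    constructor
    · intro hx
      by_cases hxS : x ∈ S
      · exact Or.inl ⟨hxS, x, ⟨hxS, hx⟩, le_rfl⟩
      · refine Or.inr ⟨hxS, ?_⟩
        rw [h0 x hxS] at hx
        simp [hx]
    · rintro (⟨hxS, t, ⟨htS, htc⟩, hxt⟩ | ⟨hxS, hx⟩)
      · exact lt_of_le_of_lt (hf hxS htS hxt) htc
      · rw [h0 x hxS]
        by_cases h : 0 < c
        · exact h
        · simp [h] at hx
  rw [key]
  refine (hSm.inter (isLowerSet_measurableSet ?_)).union (hSm.compl.inter ?_)
  · intro a b hab ⟨t, ht, hat⟩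
    exact ⟨t, ht, hab.trans hat⟩
  · by_cases h : 0 < c <;> simp [h]


namespace S5
def AJ (H : ℝ → ℝ) : Set ℝ := {u | ∀ x, u ≤ H x}
def BJ (H : ℝ → ℝ) : Set ℝ := {u | ∀ x, H x < u}
def goodJ (H : ℝ → ℝ) (u : ℝ) : Prop := u ∉ AJ H ∧ u ∉ BJ H

variable {H : ℝ → ℝ} {u v s t α β : ℝ}

lemma AJ_lower (h : u ≤ v) (hv : v ∈ AJ H) : u ∈ AJ H :=
  fun x => h.trans (hv x)

lemma BJ_upper (h : u ≤ v) (hu : u ∈ BJ H) : v ∈ BJ H :=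
  fun x => lt_of_lt_of_le (hu x) h

lemma nonempty_qfset_of_not_BJ (hu : u ∉ BJ H) : {x : ℝ | u ≤ H x}.Nonempty := by
  simp only [BJ, mem_setOf_eq, not_forall, not_lt] at hu
  exact hu

lemma bddBelow_qfset_of_not_AJ (hH : Monotone H) (hu : u ∉ AJ H) :
    BddBelow {x : ℝ | u ≤ H x} := by
  simp only [AJ, mem_setOf_eq, not_forall, not_le] at hu
  obtain ⟨x₀, hx₀⟩ := hu
  refine ⟨x₀, fun y hy => ?_⟩
  by_contra hlt
  push_neg at hlt
  exact absurd (le_trans hy (hH hlt.le)) (not_le.mpr hx₀)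

lemma qf_zero_of_AJ (hu : u ∈ AJ H) : qf H u = 0 := by
  have : {x : ℝ | u ≤ H x} = univ := eq_univ_of_forall hu
  rw [qf, this]
  apply Real.sInf_of_not_bddBelow
  intro ⟨lb, hlb⟩
  exact absurd (hlb (mem_univ (lb - 1))) (by norm_num)

lemma qf_zero_of_BJ (hu : u ∈ BJ H) : qf H u = 0 := by
  have : {x : ℝ | u ≤ H x} = ∅ := by
    ext x; simp only [mem_setOf_eq, mem_empty_iff_false, iff_false, not_le]; exact hu x
  rw [qf, this, Real.sInf_empty]

lemma qf_mono (hH : Monotone H) (hu : u ∉ AJ H) (hv : v ∉ BJ H) (huv : u ≤ v) :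
    qf H u ≤ qf H v := by
  apply csInf_le_csInf (bddBelow_qfset_of_not_AJ hH hu) (nonempty_qfset_of_not_BJ hv)
  exact fun x hx => le_trans huv hx

lemma le_H_of_qf_lt (hH : Monotone H) (ht : t ∉ BJ H) (hs : qf H t < s) : t ≤ H s := by
  by_cases hA : t ∈ AJ H
  · exact hA s
  · obtain ⟨x, hx, hxs⟩ := exists_lt_of_csInf_lt (nonempty_qfset_of_not_BJ ht) hs
    exact le_trans hx (hH hxs.le)

lemma H_lt_of_lt_qf (hH : Monotone H) (ht : t ∉ AJ H) (hs : s < qf H t) : H s < t := by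
  by_cases hB : t ∈ BJ H
  · exact hB s
  · by_contra hle
    push_neg at hle
    exact absurd (csInf_le (bddBelow_qfset_of_not_AJ hH ht) hle) (not_le.mpr hs)

lemma qf_clamp_abs (hH : Monotone H) (hα : α ∉ AJ H) (hβ : β ∉ BJ H)
    (h1 : α ≤ u) (h2 : u ≤ β) : |qf H u| ≤ |qf H α| + |qf H β| := by
  have huA : u ∉ AJ H := fun h => hα (AJ_lower h1 h)
  have huB : u ∉ BJ H := fun h => hβ (BJ_upper h2 h)
  have l1 : qf H α ≤ qf H u := qf_mono hH hα huB h1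
  have l2 : qf H u ≤ qf H β := qf_mono hH huA hβ h2
  refine (abs_le_max_abs_abs l1 l2).trans ?_
  rcases max_cases |qf H α| |qf H β| with ⟨h,_⟩|⟨h,_⟩ <;> rw [h] <;> [skip; skip] <;> simp [abs_nonneg, le_add_of_nonneg_left, le_add_of_nonneg_right]


lemma measurable_realSign : Measurable Real.sign := by
  unfold Real.sign
  exact Measurable.ite measurableSet_Iio measurable_const
    (Measurable.ite measurableSet_Ioi measurable_const measurable_const)

lemma AJ_meas (hH : Monotone H) : MeasurableSet (AJ H) := by
  have : AJ H = ⋂ (q : ℚ), Iic (H q) := by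
    ext u
    simp only [AJ, mem_setOf_eq, mem_iInter, mem_Iic]
    constructor
    · exact fun h q => h q
    · intro h x
      obtain ⟨q, hq⟩ := exists_rat_lt x
      exact (h q).trans (hH hq.le)
  rw [this]
  exact MeasurableSet.iInter (fun q => measurableSet_Iic)

lemma BJ_meas (hH : Monotone H) : MeasurableSet (BJ H) := by
  have : BJ H = ⋂ (q : ℚ), Ioi (H q) := by
    ext u
    simp only [BJ, mem_setOf_eq, mem_iInter, mem_Ioi]
    constructor
    · exact fun h q => h q
    · intro h x
      obtain ⟨q, hq⟩ := exists_rat_gt x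
      exact lt_of_le_of_lt (hH hq.le) (h q)
  rw [this]
  exact MeasurableSet.iInter (fun q => measurableSet_Ioi)

lemma measurable_qf (hH : Monotone H) : Measurable (qf H) := by
  apply measurable_of_monotoneOn_zero (S := (AJ H ∪ BJ H)ᶜ)
    ((AJ_meas hH).union (BJ_meas hH)).compl
  · intro u hu v hv huv
    exact qf_mono hH (fun h => hu (Or.inl h)) (fun h => hv (Or.inr h)) huv
  · intro t ht
    rw [notMem_compl_iff] at ht
    rcases ht with h | h
    · exact qf_zero_of_AJ h
    · exact qf_zero_of_BJ h

lemma measurable_of_antitoneOn_zero {S : Set ℝ} (hSm : MeasurableSet S) {f : ℝ → ℝ}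
    (hf : AntitoneOn f S) (h0 : ∀ t, t ∉ S → f t = 0) : Measurable f := by
  have : Measurable (fun t => f (-t)) := by
    apply measurable_of_monotoneOn_zero (S := (fun t : ℝ => -t) ⁻¹' S)
      (hSm.preimage measurable_neg)
    · intro u hu v hv huv
      exact hf hv hu (neg_le_neg huv)
    · intro t ht
      exact h0 _ ht
  have h2 : f = fun t => (fun t => f (-t)) (-t) := by
    funext t; simp
  rw [h2]
  exact this.comp measurable_neg

lemma measurable_primitive_Ioc (g : ℝ → ℝ) (a₀ : ℝ) :
    Measurable (fun y => ∫ s in Ioc a₀ y, g s) := by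
  set gp := fun s => max (g s) 0 with hgp
  set gm := fun s => max (-g s) 0 with hgm
  set Sp := {y : ℝ | IntegrableOn gp (Ioc a₀ y) volume} with hSp
  set Sm := {y : ℝ | IntegrableOn gm (Ioc a₀ y) volume} with hSm
  have hlp : IsLowerSet Sp := by
    intro y y' hy' hy
    exact hy.mono_set (Ioc_subset_Ioc le_rfl hy')
  have hlm : IsLowerSet Sm := by
    intro y y' hy' hy
    exact hy.mono_set (Ioc_subset_Ioc le_rfl hy')
  have hfp : Measurable (fun y => ∫ s in Ioc a₀ y, gp s) := by
    apply measurable_of_monotoneOn_zero (S := Sp) (isLowerSet_measurableSet hlp)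
    · intro y₁ h₁ y₂ h₂ h12
      apply setIntegral_mono_set h₂
      · filter_upwards with s using le_max_right _ _
      · exact HasSubset.Subset.eventuallyLE (Ioc_subset_Ioc le_rfl h12)
    · intro y hy
      exact integral_undef hy
  have hfm : Measurable (fun y => ∫ s in Ioc a₀ y, gm s) := by
    apply measurable_of_monotoneOn_zero (S := Sm) (isLowerSet_measurableSet hlm)
    · intro y₁ h₁ y₂ h₂ h12
      apply setIntegral_mono_set h₂
      · filter_upwards with s using le_max_right _ _
      · exact HasSubset.Subset.eventuallyLE (Ioc_subset_Ioc le_rfl h12)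
    · intro y hy
      exact integral_undef hy
  have key : (fun y => ∫ s in Ioc a₀ y, g s) =
      (Sp ∩ Sm).indicator (fun y => (∫ s in Ioc a₀ y, gp s) - ∫ s in Ioc a₀ y, gm s) := by
    funext y
    by_cases hy : y ∈ Sp ∩ Sm
    · rw [indicator_of_mem hy]
      rw [← integral_sub hy.1 hy.2]
      apply setIntegral_congr_fun measurableSet_Ioc
      intro s _
      simp only [hgp, hgm]
      rcases le_total (g s) 0 with h | h
      · rw [max_eq_right h, max_eq_left (by linarith)]; ring
      · rw [max_eq_left h, max_eq_right (by linarith)]; ring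
    · rw [indicator_of_notMem hy]
      apply integral_undef
      intro hint
      apply hy
      constructor
      · exact hint.pos_part
      · exact hint.neg.pos_part
  rw [key]
  exact (hfp.sub hfm).indicator ((isLowerSet_measurableSet hlp).inter (isLowerSet_measurableSet hlm))

lemma measurable_primitive_Ioc' (g : ℝ → ℝ) (a₀ : ℝ) :
    Measurable (fun y => ∫ s in Ioc y a₀, g s) := by
  set gp := fun s => max (g s) 0 with hgp
  set gm := fun s => max (-g s) 0 with hgm
  set Sp := {y : ℝ | IntegrableOn gp (Ioc y a₀) volume} with hSp
  set Sm := {y : ℝ | IntegrableOn gm (Ioc y a₀) volume} with hSm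
  have hlp : IsUpperSet Sp := by
    intro y y' hy' hy
    exact hy.mono_set (Ioc_subset_Ioc hy' le_rfl)
  have hlm : IsUpperSet Sm := by
    intro y y' hy' hy
    exact hy.mono_set (Ioc_subset_Ioc hy' le_rfl)
  have humeas : ∀ {s : Set ℝ}, IsUpperSet s → MeasurableSet s := by
    intro s hs
    have : MeasurableSet sᶜ := isLowerSet_measurableSet (fun a b hba ha hb => ha (hs hba hb))
    simpa using this.compl
  have hfp : Measurable (fun y => ∫ s in Ioc y a₀, gp s) := by
    apply measurable_of_antitoneOn_zero (S := Sp) (humeas hlp)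
    · intro y₁ h₁ y₂ h₂ h12
      apply setIntegral_mono_set h₁
      · filter_upwards with s using le_max_right _ _
      · exact HasSubset.Subset.eventuallyLE (Ioc_subset_Ioc h12 le_rfl)
    · intro y hy
      exact integral_undef hy
  have hfm : Measurable (fun y => ∫ s in Ioc y a₀, gm s) := by
    apply measurable_of_antitoneOn_zero (S := Sm) (humeas hlm)
    · intro y₁ h₁ y₂ h₂ h12
      apply setIntegral_mono_set h₁
      · filter_upwards with s using le_max_right _ _
      · exact HasSubset.Subset.eventuallyLE (Ioc_subset_Ioc h12 le_rfl)
    · intro y hy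
      exact integral_undef hy
  have key : (fun y => ∫ s in Ioc y a₀, g s) =
      (Sp ∩ Sm).indicator (fun y => (∫ s in Ioc y a₀, gp s) - ∫ s in Ioc y a₀, gm s) := by
    funext y
    by_cases hy : y ∈ Sp ∩ Sm
    · rw [indicator_of_mem hy]
      rw [← integral_sub hy.1 hy.2]
      apply setIntegral_congr_fun measurableSet_Ioc
      intro s _
      simp only [hgp, hgm]
      rcases le_total (g s) 0 with h | h
      · rw [max_eq_right h, max_eq_left (by linarith)]; ring
      · rw [max_eq_left h, max_eq_right (by linarith)]; ring
    · rw [indicator_of_notMem hy]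
      apply integral_undef
      intro hint
      exact hy ⟨hint.pos_part, hint.neg.pos_part⟩
  rw [key]
  exact (hfp.sub hfm).indicator ((humeas hlp).inter (humeas hlm))

section helpers
variable {g : ℝ → ℝ}

lemma abs_intervalIntegral_le_lintegral_uIoc (c d : ℝ) :
    |∫ s in c..d, g s| ≤ (∫⁻ s in Set.uIoc c d, ENNReal.ofReal ‖g s‖).toReal := by
  rw [← Real.norm_eq_abs, intervalIntegral.norm_intervalIntegral_eq]
  exact norm_integral_le_lintegral_norm _

lemma helper_tail {T : Set ℝ} (c d : ℝ) (hsub : Set.uIoc c d ⊆ T)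
    (hfin : (∫⁻ s in T, ENNReal.ofReal ‖g s‖) ≠ ⊤) :
    |∫ s in c..d, g s| ≤ (∫⁻ s in T, ENNReal.ofReal ‖g s‖).toReal := by
  refine (abs_intervalIntegral_le_lintegral_uIoc c d).trans ?_
  exact ENNReal.toReal_mono hfin (lintegral_mono_set hsub)

lemma helper_pointwise {c d C : ℝ} (hC : 0 ≤ C)
    (h : ∀ s ∈ Ioo (min c d) (max c d), |g s| ≤ C) :
    |∫ s in c..d, g s| ≤ C * (max c d - min c d) := by
  refine (abs_intervalIntegral_le_lintegral_uIoc c d).trans ?_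
  have huIoc : Set.uIoc c d = Ioc (min c d) (max c d) := rfl
  have h1 : (∫⁻ s in Set.uIoc c d, ENNReal.ofReal ‖g s‖)
      = ∫⁻ s in Ioo (min c d) (max c d), ENNReal.ofReal ‖g s‖ := by
    rw [huIoc]
    exact (setLIntegral_congr (Ioo_ae_eq_Ioc)).symm
  rw [h1]
  have h2 : (∫⁻ s in Ioo (min c d) (max c d), ENNReal.ofReal ‖g s‖)
      ≤ ∫⁻ _ in Ioo (min c d) (max c d), ENNReal.ofReal C := by
    apply setLIntegral_mono' measurableSet_Ioo
    intro s hs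
    exact ENNReal.ofReal_le_ofReal (by rw [Real.norm_eq_abs]; exact h s hs)
  refine le_trans (ENNReal.toReal_mono ?_ h2) ?_
  · rw [setLIntegral_const]
    exact ENNReal.mul_ne_top ENNReal.ofReal_ne_top (by simp [Real.volume_Ioo])
  · rw [setLIntegral_const, Real.volume_Ioo]
    rcases le_total (max c d - min c d) 0 with h0 | h0
    · rw [ENNReal.ofReal_eq_zero.mpr h0]
      simp only [mul_zero, zero_mul, ENNReal.toReal_zero]
      nlinarith [min_le_max (a := c) (b := d)]
    · rw [← ENNReal.ofReal_mul hC, ENNReal.toReal_ofReal (by positivity)]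

lemma helper_junk (a b : ℝ)
    (h : (∫⁻ s in Set.uIoc a b, ENNReal.ofReal ‖g s‖) = ⊤) :
    ∫ s in a..b, g s = 0 := by
  apply intervalIntegral.integral_undef
  intro hint
  rw [intervalIntegrable_iff] at hint
  have := hint.2
  rw [hasFiniteIntegral_iff_norm] at this
  exact absurd h (by simpa using this.ne)

end helpers

lemma uIoc_subset_uIoc_left {x y c : ℝ} (h : c ∈ Set.uIcc x y) :
    Set.uIoc c y ⊆ Set.uIoc x y := by
  rw [Set.mem_uIcc] at h
  have h1 : min x y ≤ c := by rcases h with ⟨u,v⟩|⟨u,v⟩; · exact (min_le_left x y).trans u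
                              · exact (min_le_right x y).trans u
  have h2 : c ≤ max x y := by rcases h with ⟨u,v⟩|⟨u,v⟩; · exact v.trans (le_max_right x y)
                              · exact v.trans (le_max_left x y)
  exact Set.Ioc_subset_Ioc (le_min h1 (min_le_right x y)) (max_le h2 (le_max_right x y))

noncomputable def gg (p : ℝ) (F G : ℝ → ℝ) (s : ℝ) : ℝ :=
  p * Real.sign (s - qf G (F s)) * |s - qf G (F s)| ^ (p - 1)

lemma cp_eq (p : ℝ) (F G : ℝ → ℝ) (t : ℝ) :
    cp p F G t = ∫ s in (qf F (1 / 2))..(qf F t), gg p F G s := rfl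

lemma gg_abs_le {p : ℝ} (hp : 1 < p) (F G : ℝ → ℝ) (s : ℝ) :
    |gg p F G s| ≤ p * (|s| + |qf G (F s)|) ^ (p - 1) := by
  have hp0 : (0:ℝ) ≤ p := by linarith
  have hp1 : (0:ℝ) ≤ p - 1 := by linarith
  set x := s - qf G (F s) with hx
  have h1 : |gg p F G s| = p * |Real.sign x| * |x| ^ (p - 1) := by
    rw [gg, abs_mul, abs_mul, abs_of_nonneg hp0,
      abs_of_nonneg (Real.rpow_nonneg (abs_nonneg _) _)]
  rw [h1]
  have hsgn : |Real.sign x| ≤ 1 := by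
    rcases Real.sign_apply_eq x with h|h|h <;> rw [h] <;> norm_num
  calc p * |Real.sign x| * |x| ^ (p - 1) ≤ p * 1 * |x| ^ (p - 1) := by
        apply mul_le_mul_of_nonneg_right _ (Real.rpow_nonneg (abs_nonneg _) _)
        exact mul_le_mul_of_nonneg_left hsgn hp0
    _ = p * |x| ^ (p - 1) := by ring
    _ ≤ p * (|s| + |qf G (F s)|) ^ (p - 1) := by
        apply mul_le_mul_of_nonneg_left _ hp0
        exact Real.rpow_le_rpow (abs_nonneg _) (abs_sub _ _) hp1

lemma measurable_cp {p : ℝ} {F G : ℝ → ℝ} (hF : Monotone F) :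
    Measurable (cp p F G) := by
  have hm : Measurable (qf F) := measurable_qf hF
  have h1 := measurable_primitive_Ioc (gg p F G) (qf F (1 / 2))
  have h2 := measurable_primitive_Ioc' (gg p F G) (qf F (1 / 2))
  have : cp p F G = fun t =>
      (fun y => ∫ s in Ioc (qf F (1 / 2)) y, gg p F G s) (qf F t)
      - (fun y => ∫ s in Ioc y (qf F (1 / 2)), gg p F G s) (qf F t) := rfl
  rw [this]
  exact (h1.comp hm).sub (h2.comp hm)

lemma uIoc_subset_uIoc_left' {x y c : ℝ} (h1 : min x y ≤ c) (h2 : c ≤ max x y) :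
    Set.uIoc c y ⊆ Set.uIoc x y :=
  Set.Ioc_subset_Ioc (le_min h1 (min_le_right x y)) (max_le h2 (le_max_right x y))

set_option maxHeartbeats 2000000 in
lemma main_bound {p : ℝ} {F G : ℝ → ℝ} (hp : 1 < p) (hF : Monotone F) (hG : Monotone G) :
    ∃ K : ℝ, 0 ≤ K ∧ ∀ t ∈ Ioo (0:ℝ) 1,
      |cp p F G t| ≤ K + p * (|qf F t| + |qf G t| + K) ^ (p - 1) * (|qf F t| + K) := by
  classical
  have hp0 : (0:ℝ) ≤ p := by linarith
  have hp1 : (0:ℝ) ≤ p - 1 := by linarith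
  set g : ℝ → ℝ := gg p F G with hg
  set a : ℝ := qf F (1 / 2) with ha
  set κ : ℝ → ℝ≥0∞ := fun v => ∫⁻ s in Set.uIoc (qf F v) a, ENNReal.ofReal ‖g s‖ with hκ
  have choice : ∀ (P : ℝ → Prop), ∃ v : ℝ, (∃ w, P w) → P v := by
    intro P
    by_cases h : ∃ w, P w
    · exact ⟨h.choose, fun _ => h.choose_spec⟩
    · exact ⟨0, fun hh => absurd hh h⟩
  obtain ⟨v₁, hv₁⟩ := choice (fun v => goodJ F v ∧ v ∈ AJ G ∧ κ v ≠ ⊤)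
  obtain ⟨v₂, hv₂⟩ := choice (fun v => goodJ F v ∧ goodJ G v ∧ κ v ≠ ⊤)
  obtain ⟨v₃, hv₃⟩ := choice (fun v => goodJ F v ∧ v ∈ BJ G ∧ κ v ≠ ⊤)
  set K : ℝ := 1 + |a| + |∫ s in a..(0:ℝ), g s|
    + (κ v₁).toReal + (κ v₂).toReal + (κ v₃).toReal + |qf G v₂| with hK
  have hn1 : (0:ℝ) ≤ (κ v₁).toReal := ENNReal.toReal_nonneg
  have hn2 : (0:ℝ) ≤ (κ v₂).toReal := ENNReal.toReal_nonneg
  have hn3 : (0:ℝ) ≤ (κ v₃).toReal := ENNReal.toReal_nonneg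
  have hK0 : 0 ≤ K := by
    rw [hK]; positivity
  have haK : |a| ≤ K := by
    rw [hK]; have := abs_nonneg (∫ s in a..(0:ℝ), g s); have := abs_nonneg (qf G v₂); linarith
  refine ⟨K, hK0, ?_⟩
  intro t ht
  set z : ℝ := qf F t with hz
  set mt : ℝ := qf G t with hmt
  have hmt0 : 0 ≤ |mt| := abs_nonneg _
  have hz0 : 0 ≤ |z| := abs_nonneg _
  have hrhs0 : 0 ≤ p * (|z| + |mt| + K) ^ (p - 1) * (|z| + K) := by positivity
  have mono_final : ∀ {T B L : ℝ}, T ≤ K → 0 ≤ B → B ≤ |z| + |mt| + K → 0 ≤ L →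
      L ≤ |z| + K → T + p * B ^ (p - 1) * L
        ≤ K + p * (|z| + |mt| + K) ^ (p - 1) * (|z| + K) := by
    intro T B L h1 h2 h3 h4 h5
    have hB : B ^ (p - 1) ≤ (|z| + |mt| + K) ^ (p - 1) := Real.rpow_le_rpow h2 h3 hp1
    have hL : p * B ^ (p - 1) * L ≤ p * (|z| + |mt| + K) ^ (p - 1) * (|z| + K) := by
      apply mul_le_mul (mul_le_mul_of_nonneg_left hB hp0) h5 h4 (by positivity)
    linarith
  by_cases htF : t ∈ AJ F ∪ BJ F
  · -- junk endpoint : cp is a fixed constant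
    have hzz : z = 0 := by
      rcases htF with h | h
      exacts [qf_zero_of_AJ h, qf_zero_of_BJ h]
    have hb : |cp p F G t| ≤ K := by
      rw [cp_eq, ← ha, ← hz, hzz, hK]
      have := abs_nonneg (qf G v₂)
      linarith [abs_nonneg a]
    linarith
  have htgF : goodJ F t := ⟨fun h => htF (Or.inl h), fun h => htF (Or.inr h)⟩
  by_cases hW : IntervalIntegrable g volume a z
  swap
  · have hzero : cp p F G t = 0 := by
      rw [cp_eq, ← ha, ← hz]
      exact intervalIntegral.integral_undef hW
    rw [hzero, abs_zero]
    linarith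
  have hWfin : (∫⁻ s in Set.uIoc a z, ENNReal.ofReal ‖g s‖) ≠ ⊤ := by
    rw [intervalIntegrable_iff] at hW
    have h2 := hW.2
    rw [hasFiniteIntegral_iff_norm] at h2
    exact h2.ne
  have hκt : κ t ≠ ⊤ := by
    show (∫⁻ s in Set.uIoc (qf F t) a, ENNReal.ofReal ‖g s‖) ≠ ⊤
    rw [← hz, Set.uIoc_comm]
    exact hWfin
  have split : ∀ c : ℝ, c ∈ Set.uIcc a z →
      cp p F G t = (∫ s in a..c, g s) + ∫ s in c..z, g s := by
    intro c hc
    rw [cp_eq, ← ha, ← hz]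
    exact (intervalIntegral.integral_add_adjacent_intervals
      (hW.mono_set (Set.uIcc_subset_uIcc Set.left_mem_uIcc hc))
      (hW.mono_set (Set.uIcc_subset_uIcc hc Set.right_mem_uIcc))).symm
  rcases le_total z a with hor | hor
  · -- O1 : z ≤ a, on the domain F s ≥ t
    have hsabs : ∀ s, s ∈ Ioo z a → |s| ≤ |z| + |a| := by
      intro s hs
      refine (abs_le_max_abs_abs hs.1.le hs.2.le).trans ?_
      rcases max_cases |z| |a| with ⟨h,_⟩|⟨h,_⟩ <;> rw [h] <;> linarith [abs_nonneg z, abs_nonneg a]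
    by_cases hBJt : t ∈ BJ G
    · -- all levels above t are degenerate : qf G (F s) = 0
      have hpoint : ∀ s ∈ Ioo (min a z) (max a z), |g s| ≤ p * (|z| + |a|) ^ (p - 1) := by
        rw [min_eq_right hor, max_eq_left hor]
        intro s hs
        have hFs : t ≤ F s := le_H_of_qf_lt hF htgF.2 hs.1
        have h0 : qf G (F s) = 0 := qf_zero_of_BJ (BJ_upper hFs hBJt)
        refine (gg_abs_le hp F G s).trans ?_
        rw [h0]
        simp only [abs_zero, add_zero]
        exact mul_le_mul_of_nonneg_left
          (Real.rpow_le_rpow (abs_nonneg _) (hsabs s hs) hp1) hp0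
      have hb := helper_pointwise (g := g) (c := a) (d := z) (by positivity) hpoint
      rw [min_eq_right hor, max_eq_left hor] at hb
      rw [cp_eq, ← ha, ← hz]
      refine hb.trans ?_
      have hlen : a - z ≤ |z| + |a| := by linarith [le_abs_self a, neg_le_abs z]
      calc p * (|z| + |a|) ^ (p - 1) * (a - z)
          ≤ p * (|z| + |a|) ^ (p - 1) * (|z| + |a|) := by
            apply mul_le_mul_of_nonneg_left hlen (by positivity)
        _ = 0 + p * (|z| + |a|) ^ (p - 1) * (|z| + |a|) := by ring
        _ ≤ _ := mono_final hK0 (by positivity) (by linarith) (by positivity) (by linarith)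
    by_cases hAJt : t ∈ AJ G
    · -- lower junk zone for G : use v₁
      have hex : ∃ w, goodJ F w ∧ w ∈ AJ G ∧ κ w ≠ ⊤ := ⟨t, htgF, hAJt, hκt⟩
      obtain ⟨hvF, hvA, hvκ⟩ := hv₁ hex
      set c : ℝ := max z (min (qf F v₁) a) with hc
      have hcz : z ≤ c := le_max_left _ _
      have hca : c ≤ a := max_le hor (min_le_right _ _)
      rw [split c (by rw [Set.mem_uIcc]; right; exact ⟨hcz, hca⟩)]
      have htail : |∫ s in a..c, g s| ≤ (κ v₁).toReal := by
        apply helper_tail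
        · rw [Set.uIoc_comm]
          apply uIoc_subset_uIoc_left'
          · exact le_max_right _ _ |>.trans_eq rfl |>.trans (le_of_eq rfl) |>.trans le_rfl
          · exact max_le (hor.trans (le_max_right _ _)) ((min_le_left _ _).trans (le_max_left _ _))
        · exact hvκ
      have hinner : |∫ s in c..z, g s|
          ≤ p * (|z| + |a|) ^ (p - 1) * (max c z - min c z) := by
        apply helper_pointwise (by positivity)
        rw [min_eq_right hcz, max_eq_left hcz]
        intro s hs
        have hsv : s < qf F v₁ := by
          have h1 : s < max z (qf F v₁) :=
            lt_of_lt_of_le hs.2 (max_le_max le_rfl (min_le_left _ _))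
          rcases le_or_gt (qf F v₁) z with hcase | hcase
          · rw [max_eq_left hcase] at h1
            exact absurd hs.1 (not_lt.mpr h1.le)
          · rwa [max_eq_right hcase.le] at h1
        have h0 : qf G (F s) = 0 :=
          qf_zero_of_AJ (AJ_lower (H_lt_of_lt_qf hF hvF.1 hsv).le hvA)
        refine (gg_abs_le hp F G s).trans ?_
        rw [h0]
        simp only [abs_zero, add_zero]
        refine mul_le_mul_of_nonneg_left
          (Real.rpow_le_rpow (abs_nonneg _) (hsabs s ⟨hs.1, lt_of_lt_of_le hs.2 hca⟩) hp1) hp0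
      rw [min_eq_right hcz, max_eq_left hcz] at hinner
      have hlen : c - z ≤ |z| + |a| := by linarith [le_abs_self a, neg_le_abs z]
      refine (abs_add_le _ _).trans ?_
      have hTK : (κ v₁).toReal ≤ K := by rw [hK]; have := abs_nonneg (qf G v₂); linarith [abs_nonneg a, abs_nonneg (∫ s in a..(0:ℝ), g s)]
      calc |∫ s in a..c, g s| + |∫ s in c..z, g s|
          ≤ (κ v₁).toReal + p * (|z| + |a|) ^ (p - 1) * (|z| + |a|) := by
            have := mul_le_mul_of_nonneg_left hlen
              (show (0:ℝ) ≤ p * (|z| + |a|) ^ (p - 1) by positivity)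
            linarith [htail, hinner]
        _ ≤ _ := mono_final hTK (by positivity) (by linarith) (by positivity) (by linarith)
    · -- generic zone for G : use v₂
      have htgG : goodJ G t := ⟨hAJt, hBJt⟩
      have hex : ∃ w, goodJ F w ∧ goodJ G w ∧ κ w ≠ ⊤ := ⟨t, htgF, htgG, hκt⟩
      obtain ⟨hvF, hvG, hvκ⟩ := hv₂ hex
      set c : ℝ := max z (min (qf F v₂) a) with hc
      have hcz : z ≤ c := le_max_left _ _
      have hca : c ≤ a := max_le hor (min_le_right _ _)
      rw [split c (by rw [Set.mem_uIcc]; right; exact ⟨hcz, hca⟩)]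
      have htail : |∫ s in a..c, g s| ≤ (κ v₂).toReal := by
        apply helper_tail
        · rw [Set.uIoc_comm]
          apply uIoc_subset_uIoc_left'
          · exact le_max_right _ _
          · exact max_le (hor.trans (le_max_right _ _)) ((min_le_left _ _).trans (le_max_left _ _))
        · exact hvκ
      have hinner : |∫ s in c..z, g s|
          ≤ p * (|z| + |a| + (|mt| + |qf G v₂|)) ^ (p - 1) * (max c z - min c z) := by
        apply helper_pointwise (by positivity)
        rw [min_eq_right hcz, max_eq_left hcz]
        intro s hs
        have hsv : s < qf F v₂ := by
          have h1 : s < max z (qf F v₂) :=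
            lt_of_lt_of_le hs.2 (max_le_max le_rfl (min_le_left _ _))
          rcases le_or_gt (qf F v₂) z with hcase | hcase
          · rw [max_eq_left hcase] at h1
            exact absurd hs.1 (not_lt.mpr h1.le)
          · rwa [max_eq_right hcase.le] at h1
        have hts : t ≤ F s := le_H_of_qf_lt hF htgF.2 hs.1
        have hsv2 : F s ≤ v₂ := (H_lt_of_lt_qf hF hvF.1 hsv).le
        have habs : |qf G (F s)| ≤ |mt| + |qf G v₂| :=
          qf_clamp_abs hG htgG.1 hvG.2 hts hsv2
        refine (gg_abs_le hp F G s).trans ?_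
        refine mul_le_mul_of_nonneg_left (Real.rpow_le_rpow (by positivity) ?_ hp1) hp0
        have := hsabs s ⟨hs.1, lt_of_lt_of_le hs.2 hca⟩
        linarith
      rw [min_eq_right hcz, max_eq_left hcz] at hinner
      have hlen : c - z ≤ |z| + |a| := by linarith [le_abs_self a, neg_le_abs z]
      refine (abs_add_le _ _).trans ?_
      have hTK : (κ v₂).toReal ≤ K := by rw [hK]; have := abs_nonneg (qf G v₂); linarith [abs_nonneg a, abs_nonneg (∫ s in a..(0:ℝ), g s)]
      have hGv2K : |qf G v₂| ≤ K := by rw [hK]; linarith [abs_nonneg a, abs_nonneg (∫ s in a..(0:ℝ), g s)]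
      have haGK : |a| + |qf G v₂| ≤ K := by rw [hK]; linarith [abs_nonneg (∫ s in a..(0:ℝ), g s)]
      calc |∫ s in a..c, g s| + |∫ s in c..z, g s|
          ≤ (κ v₂).toReal + p * (|z| + |a| + (|mt| + |qf G v₂|)) ^ (p - 1) * (|z| + |a|) := by
            have := mul_le_mul_of_nonneg_left hlen
              (show (0:ℝ) ≤ p * (|z| + |a| + (|mt| + |qf G v₂|)) ^ (p - 1) by positivity)
            linarith [htail, hinner]
        _ ≤ _ := mono_final hTK (by positivity) (by linarith) (by positivity) (by linarith)
  · -- O2 : a ≤ z, on the domain F s < t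
    have hsabs : ∀ s, s ∈ Ioo a z → |s| ≤ |z| + |a| := by
      intro s hs
      refine (abs_le_max_abs_abs hs.1.le hs.2.le).trans ?_
      rcases max_cases |a| |z| with ⟨h,_⟩|⟨h,_⟩ <;> rw [h] <;> linarith [abs_nonneg z, abs_nonneg a]
    by_cases hAJt : t ∈ AJ G
    · -- all levels below t are degenerate
      have hpoint : ∀ s ∈ Ioo (min a z) (max a z), |g s| ≤ p * (|z| + |a|) ^ (p - 1) := by
        rw [min_eq_left hor, max_eq_right hor]
        intro s hs
        have hFs : F s < t := H_lt_of_lt_qf hF htgF.1 hs.2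
        have h0 : qf G (F s) = 0 := qf_zero_of_AJ (AJ_lower hFs.le hAJt)
        refine (gg_abs_le hp F G s).trans ?_
        rw [h0]
        simp only [abs_zero, add_zero]
        exact mul_le_mul_of_nonneg_left
          (Real.rpow_le_rpow (abs_nonneg _) (hsabs s hs) hp1) hp0
      have hb := helper_pointwise (g := g) (c := a) (d := z) (by positivity) hpoint
      rw [min_eq_left hor, max_eq_right hor] at hb
      rw [cp_eq, ← ha, ← hz]
      refine hb.trans ?_
      have hlen : z - a ≤ |z| + |a| := by linarith [le_abs_self z, neg_le_abs a]
      calc p * (|z| + |a|) ^ (p - 1) * (z - a)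
          ≤ p * (|z| + |a|) ^ (p - 1) * (|z| + |a|) := by
            apply mul_le_mul_of_nonneg_left hlen (by positivity)
        _ = 0 + p * (|z| + |a|) ^ (p - 1) * (|z| + |a|) := by ring
        _ ≤ _ := mono_final hK0 (by positivity) (by linarith) (by positivity) (by linarith)
    by_cases hBJt : t ∈ BJ G
    · -- upper junk zone for G : use v₃
      have hex : ∃ w, goodJ F w ∧ w ∈ BJ G ∧ κ w ≠ ⊤ := ⟨t, htgF, hBJt, hκt⟩
      obtain ⟨hvF, hvB, hvκ⟩ := hv₃ hex
      set c : ℝ := min z (max (qf F v₃) a) with hc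
      have hca : a ≤ c := le_min hor (le_max_right _ _)
      have hcz : c ≤ z := min_le_left _ _
      rw [split c (by rw [Set.mem_uIcc]; left; exact ⟨hca, hcz⟩)]
      have htail : |∫ s in a..c, g s| ≤ (κ v₃).toReal := by
        apply helper_tail
        · rw [Set.uIoc_comm]
          apply uIoc_subset_uIoc_left'
          · exact (min_le_right _ _).trans hca
          · exact min_le_right _ _
        · exact hvκ
      have hinner : |∫ s in c..z, g s|
          ≤ p * (|z| + |a|) ^ (p - 1) * (max c z - min c z) := by
        apply helper_pointwise (by positivity)
        rw [min_eq_left hcz, max_eq_right hcz]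
        intro s hs
        have hsv : qf F v₃ < s := by
          have h1 : min z (qf F v₃) ≤ c := min_le_min le_rfl (le_max_left _ _)
          rcases le_or_gt z (qf F v₃) with hcase | hcase
          · rw [min_eq_left hcase] at h1
            exact absurd hs.2 (not_lt.mpr (h1.trans hs.1.le))
          · rw [min_eq_right hcase.le] at h1
            exact lt_of_le_of_lt h1 hs.1
        have hFs : v₃ ≤ F s := le_H_of_qf_lt hF hvF.2 hsv
        have h0 : qf G (F s) = 0 := qf_zero_of_BJ (BJ_upper hFs hvB)
        refine (gg_abs_le hp F G s).trans ?_
        rw [h0]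
        simp only [abs_zero, add_zero]
        refine mul_le_mul_of_nonneg_left
          (Real.rpow_le_rpow (abs_nonneg _) (hsabs s ⟨lt_of_le_of_lt hca hs.1, hs.2⟩) hp1) hp0
      rw [min_eq_left hcz, max_eq_right hcz] at hinner
      have hlen : z - c ≤ |z| + |a| := by linarith [le_abs_self z, neg_le_abs a]
      refine (abs_add_le _ _).trans ?_
      have hTK : (κ v₃).toReal ≤ K := by rw [hK]; have := abs_nonneg (qf G v₂); linarith [abs_nonneg a, abs_nonneg (∫ s in a..(0:ℝ), g s)]
      calc |∫ s in a..c, g s| + |∫ s in c..z, g s|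
          ≤ (κ v₃).toReal + p * (|z| + |a|) ^ (p - 1) * (|z| + |a|) := by
            have := mul_le_mul_of_nonneg_left hlen
              (show (0:ℝ) ≤ p * (|z| + |a|) ^ (p - 1) by positivity)
            linarith [htail, hinner]
        _ ≤ _ := mono_final hTK (by positivity) (by linarith) (by positivity) (by linarith)
    · -- generic zone : use v₂
      have htgG : goodJ G t := ⟨hAJt, hBJt⟩
      have hex : ∃ w, goodJ F w ∧ goodJ G w ∧ κ w ≠ ⊤ := ⟨t, htgF, htgG, hκt⟩
      obtain ⟨hvF, hvG, hvκ⟩ := hv₂ hex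
      set c : ℝ := min z (max (qf F v₂) a) with hc
      have hca : a ≤ c := le_min hor (le_max_right _ _)
      have hcz : c ≤ z := min_le_left _ _
      rw [split c (by rw [Set.mem_uIcc]; left; exact ⟨hca, hcz⟩)]
      have htail : |∫ s in a..c, g s| ≤ (κ v₂).toReal := by
        apply helper_tail
        · rw [Set.uIoc_comm]
          apply uIoc_subset_uIoc_left'
          · exact (min_le_right _ _).trans hca
          · exact min_le_right _ _
        · exact hvκ
      have hinner : |∫ s in c..z, g s|
          ≤ p * (|z| + |a| + (|mt| + |qf G v₂|)) ^ (p - 1) * (max c z - min c z) := by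
        apply helper_pointwise (by positivity)
        rw [min_eq_left hcz, max_eq_right hcz]
        intro s hs
        have hsv : qf F v₂ < s := by
          have h1 : min z (qf F v₂) ≤ c := min_le_min le_rfl (le_max_left _ _)
          rcases le_or_gt z (qf F v₂) with hcase | hcase
          · rw [min_eq_left hcase] at h1
            exact absurd hs.2 (not_lt.mpr (h1.trans hs.1.le))
          · rw [min_eq_right hcase.le] at h1
            exact lt_of_le_of_lt h1 hs.1
        have hFs : v₂ ≤ F s := le_H_of_qf_lt hF hvF.2 hsv
        have hst : F s ≤ t := (H_lt_of_lt_qf hF htgF.1 hs.2).le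
        have habs : |qf G (F s)| ≤ |qf G v₂| + |mt| :=
          qf_clamp_abs hG hvG.1 htgG.2 hFs hst
        refine (gg_abs_le hp F G s).trans ?_
        refine mul_le_mul_of_nonneg_left (Real.rpow_le_rpow (by positivity) ?_ hp1) hp0
        have := hsabs s ⟨lt_of_le_of_lt hca hs.1, hs.2⟩
        linarith
      rw [min_eq_left hcz, max_eq_right hcz] at hinner
      have hlen : z - c ≤ |z| + |a| := by linarith [le_abs_self z, neg_le_abs a]
      refine (abs_add_le _ _).trans ?_
      have hTK : (κ v₂).toReal ≤ K := by rw [hK]; have := abs_nonneg (qf G v₂); linarith [abs_nonneg a, abs_nonneg (∫ s in a..(0:ℝ), g s)]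
      have hGv2K : |qf G v₂| ≤ K := by rw [hK]; linarith [abs_nonneg a, abs_nonneg (∫ s in a..(0:ℝ), g s)]
      have haGK : |a| + |qf G v₂| ≤ K := by rw [hK]; linarith [abs_nonneg (∫ s in a..(0:ℝ), g s)]
      calc |∫ s in a..c, g s| + |∫ s in c..z, g s|
          ≤ (κ v₂).toReal + p * (|z| + |a| + (|mt| + |qf G v₂|)) ^ (p - 1) * (|z| + |a|) := by
            have := mul_le_mul_of_nonneg_left hlen
              (show (0:ℝ) ≤ p * (|z| + |a| + (|mt| + |qf G v₂|)) ^ (p - 1) by positivity)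
            linarith [htail, hinner]
        _ ≤ _ := mono_final hTK (by positivity) (by linarith) (by positivity) (by linarith)

lemma sq_bound {p K x y : ℝ} (hp : 1 < p) (hK : 0 ≤ K) (hx : 0 ≤ x) (hy : 0 ≤ y) :
    (K + p * (x + y + K) ^ (p - 1) * (x + K)) ^ 2
      ≤ (2*K^2 + 2*p^2*(3:ℝ)^(2*p)*(K+1)^(2*p))
        + (2*p^2*(3:ℝ)^(2*p)) * (x ^ (2*p) + y ^ (2*p)) := by
  have hp0 : (0:ℝ) < p := by linarith
  have h2p : (0:ℝ) ≤ 2*p := by linarith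
  set r : ℝ := x + y + K + 1 with hrdef
  have hr0 : (0:ℝ) < r := by linarith
  have h1 : (x + y + K) ^ (p - 1) ≤ r ^ (p - 1) :=
    Real.rpow_le_rpow (by linarith) (by linarith) (by linarith)
  have hrp : r ^ (p - 1) * r = r ^ p := by
    have h := Real.rpow_add_one hr0.ne' (p - 1)
    rw [sub_add_cancel] at h
    rw [← h]
  have h2 : K + p * (x + y + K) ^ (p - 1) * (x + K) ≤ K + p * r ^ p := by
    have hstep : p * (x + y + K) ^ (p - 1) * (x + K) ≤ p * r ^ (p - 1) * r := by
      apply mul_le_mul (mul_le_mul_of_nonneg_left h1 hp0.le) (by linarith) (by linarith)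
        (by positivity)
    have hstep2 : p * r ^ (p - 1) * r = p * r ^ p := by rw [mul_assoc, hrp]
    linarith
  have hL0 : 0 ≤ K + p * (x + y + K) ^ (p - 1) * (x + K) := by positivity
  have hsq : (K + p * (x + y + K) ^ (p - 1) * (x + K)) ^ 2 ≤ (K + p * r ^ p) ^ 2 := by
    nlinarith [h2, hL0]
  set M : ℝ := max x (max y (K+1)) with hM
  have h1x : x ≤ M := le_max_left _ _
  have h1y : y ≤ M := (le_max_left _ _).trans (le_max_right _ _)
  have h1k : K + 1 ≤ M := (le_max_right _ _).trans (le_max_right _ _)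
  have hM0 : 0 ≤ M := by linarith
  have hr2p : r ^ (2*p) ≤ (3:ℝ)^(2*p) * (x^(2*p) + y^(2*p) + (K+1)^(2*p)) := by
    have e1 : r ^ (2*p) ≤ (3 * M) ^ (2*p) :=
      Real.rpow_le_rpow hr0.le (by linarith) h2p
    have e2 : (3 * M) ^ (2*p) = (3:ℝ)^(2*p) * M^(2*p) :=
      Real.mul_rpow (by norm_num) hM0
    have e3 : M ^ (2*p) ≤ x^(2*p) + y^(2*p) + (K+1)^(2*p) := by
      have n1 : 0 ≤ x^(2*p) := Real.rpow_nonneg hx _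
      have n2 : 0 ≤ y^(2*p) := Real.rpow_nonneg hy _
      have n3 : 0 ≤ (K+1)^(2*p) := Real.rpow_nonneg (by linarith) _
      rcases max_cases x (max y (K+1)) with ⟨h,_⟩|⟨h,_⟩
      · rw [hM, h]; linarith
      · rcases max_cases y (K+1) with ⟨h',_⟩|⟨h',_⟩
        · rw [hM, h, h']; linarith
        · rw [hM, h, h']; linarith
    calc r ^ (2*p) ≤ (3 * M) ^ (2*p) := e1
      _ = (3:ℝ)^(2*p) * M^(2*p) := e2
      _ ≤ (3:ℝ)^(2*p) * (x^(2*p) + y^(2*p) + (K+1)^(2*p)) := by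
          apply mul_le_mul_of_nonneg_left e3 (Real.rpow_nonneg (by norm_num) _)
  have hrpp : (r^p)^2 = r^(2*p) := by
    rw [← Real.rpow_natCast (r^p) 2, ← Real.rpow_mul hr0.le]
    norm_num
    ring_nf
  have hfin : (K + p * r ^ p)^2 ≤ 2*K^2 + 2*p^2*(r^p)^2 := by
    nlinarith [sq_nonneg (K - p * r^p)]
  have hlast : 2*p^2*(r^p)^2 ≤ 2*p^2*((3:ℝ)^(2*p) * (x^(2*p) + y^(2*p) + (K+1)^(2*p))) := by
    rw [hrpp]
    apply mul_le_mul_of_nonneg_left hr2p (by positivity)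
  nlinarith [hsq, hfin, hlast]

end S5

/-- If `F, G` are distribution functions with finite `2p`-th moments, `p > 1`, then
`t ↦ c_p(t;F,G)` belongs to `L²(0,1)`. -/
theorem stmt_5 (p : ℝ) (hp : 1 < p) (F G : ℝ → ℝ)
    (hF : Monotone F) (hG : Monotone G)
    (hFmom : IntegrableOn (fun t => |qf F t| ^ (2 * p)) (Ioo 0 1))
    (hGmom : IntegrableOn (fun t => |qf G t| ^ (2 * p)) (Ioo 0 1)) :
    MemLp (fun t => cp p F G t) 2 (volume.restrict (Ioo (0 : ℝ) 1)) := by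
  obtain ⟨K, hK0, hbd⟩ := S5.main_bound hp hF hG
  have hp0 : (0:ℝ) ≤ p := by linarith
  have hp1 : (0:ℝ) ≤ p - 1 := by linarith
  have hQm : Measurable (qf F) := S5.measurable_qf hF
  have hGm : Measurable (qf G) := S5.measurable_qf hG
  set Bnd : ℝ → ℝ :=
    fun t => K + p * (|qf F t| + |qf G t| + K) ^ (p - 1) * (|qf F t| + K) with hBnd
  have hBndM : Measurable Bnd := by
    apply Measurable.add measurable_const
    apply Measurable.mul
    · apply Measurable.mul measurable_const
      exact (Real.continuous_rpow_const hp1).measurable.comp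
        ((hQm.abs.add hGm.abs).add_const K)
    · exact hQm.abs.add_const K
  have hBnd0 : ∀ t, 0 ≤ Bnd t := by
    intro t
    have h1 : 0 ≤ (|qf F t| + |qf G t| + K) ^ (p - 1) := Real.rpow_nonneg (by positivity) _
    have h2 : 0 ≤ |qf F t| + K := by positivity
    have h3 := mul_nonneg (mul_nonneg hp0 h1) h2
    rw [hBnd]
    dsimp only
    linarith
  set C₁ : ℝ := 2*K^2 + 2*p^2*(3:ℝ)^(2*p)*(K+1)^(2*p) with hC₁
  set C₂ : ℝ := 2*p^2*(3:ℝ)^(2*p) with hC₂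
  have hC₁0 : 0 ≤ C₁ := by
    have := Real.rpow_nonneg (show (0:ℝ) ≤ 3 by norm_num) (2*p)
    have := Real.rpow_nonneg (show (0:ℝ) ≤ K+1 by linarith) (2*p)
    rw [hC₁]; positivity
  have hC₂0 : 0 ≤ C₂ := by
    have := Real.rpow_nonneg (show (0:ℝ) ≤ 3 by norm_num) (2*p)
    rw [hC₂]; positivity
  have hdom : IntegrableOn
      (fun t => C₁ + C₂ * (|qf F t| ^ (2*p) + |qf G t| ^ (2*p))) (Ioo 0 1) volume := by
    apply Integrable.add
    · exact (integrableOn_const_iff).mpr (Or.inr (by rw [Real.volume_Ioo]; exact ENNReal.ofReal_lt_top))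
    · exact (hFmom.add hGmom).const_mul C₂
  have hIntSq : Integrable (fun t => Bnd t ^ 2) (volume.restrict (Ioo (0:ℝ) 1)) := by
    apply Integrable.mono hdom ((hBndM.pow_const 2).aestronglyMeasurable)
    apply ae_of_all
    intro t
    have hb : Bnd t ^ 2 ≤ C₁ + C₂ * (|qf F t| ^ (2*p) + |qf G t| ^ (2*p)) :=
      S5.sq_bound hp hK0 (abs_nonneg _) (abs_nonneg _)
    have hd0 : 0 ≤ C₁ + C₂ * (|qf F t| ^ (2*p) + |qf G t| ^ (2*p)) := by
      have := Real.rpow_nonneg (abs_nonneg (qf F t)) (2*p)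
      have := Real.rpow_nonneg (abs_nonneg (qf G t)) (2*p)
      positivity
    rw [Real.norm_eq_abs, Real.norm_eq_abs, abs_of_nonneg (sq_nonneg _), abs_of_nonneg hd0]
    exact hb
  have hBndMem : MemLp Bnd 2 (volume.restrict (Ioo (0:ℝ) 1)) :=
    (memLp_two_iff_integrable_sq hBndM.aestronglyMeasurable).mpr hIntSq
  apply hBndMem.of_le (S5.measurable_cp hF).aestronglyMeasurable
  rw [ae_restrict_iff' measurableSet_Ioo]
  apply ae_of_all
  intro t ht
  rw [Real.norm_eq_abs, Real.norm_eq_abs, abs_of_nonneg (hBnd0 t)]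
  exact hbd t ht
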